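/- For μ ∈ 𝒫(X), let f_μ(x) denote the unique maximizer over U of Q^{reg,*}_μ(x,·) (unique by ρ-strong concavity in u). Then for all x, x̂ ∈ X and μ, μ̂ ∈ 𝒫(X), ‖f_μ(x) − f_{μ̂}(x̂)‖₁ ≤ (1/ρ) K_{H1} (1_{x≠x̂} + ‖μ − μ̂‖₁), where K_{H1} := Q_Lip/(1 − β) and Q_Lip := L1/(1 − βK1/2). (Lemma 4.) -/

import Mathlib

namespace MFG

open Finset

def IsProb {E : Type*} [Fintype E] (μ : E → ℝ) : Prop :=
  (∀ e, 0 ≤ μ e) ∧ ∑ e, μ e = 1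

def l1 {E : Type*} [Fintype E] (μ ν : E → ℝ) : ℝ :=
  ∑ e, |μ e - ν e|

def ind {E : Type*} [DecidableEq E] (x y : E) : ℝ :=
  if x = y then 0 else 1

def RewardLip {X A : Type*} [Fintype X] [Fintype A] [DecidableEq X] [DecidableEq A]
    (r : X → A → (X → ℝ) → ℝ) (L1 : ℝ) : Prop :=
  ∀ x x' a a' μ μ', IsProb μ → IsProb μ' →
    |r x a μ - r x' a' μ'| ≤ L1 * (ind x x' + 2 * ind a a' + l1 μ μ')

def KernelLip {X A : Type*} [Fintype X] [Fintype A] [DecidableEq X] [DecidableEq A]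
    (p : X → A → (X → ℝ) → X → ℝ) (K1 : ℝ) : Prop :=
  ∀ x x' a a' μ μ', IsProb μ → IsProb μ' →
    l1 (p x a μ) (p x' a' μ') ≤ K1 * (ind x x' + 2 * ind a a' + l1 μ μ')

def IsKernel {X A : Type*} [Fintype X] [Fintype A]
    (p : X → A → (X → ℝ) → X → ℝ) : Prop :=
  ∀ x a μ, IsProb μ → IsProb (p x a μ)

def RewardNonneg {X A : Type*} [Fintype X] [Fintype A]
    (r : X → A → (X → ℝ) → ℝ) : Prop :=
  ∀ x a μ, IsProb μ → 0 ≤ r x a μ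

def OmegaLip {A : Type*} [Fintype A] (Ω : (A → ℝ) → ℝ) (Lreg : ℝ) : Prop :=
  ∀ u v, IsProb u → IsProb v → |Ω u - Ω v| ≤ Lreg * l1 u v

def StrongConvex {A : Type*} [Fintype A] (Ω : (A → ℝ) → ℝ)
    (DΩ : (A → ℝ) → (A → ℝ)) (ρ : ℝ) : Prop :=
  ∀ u v, IsProb u → IsProb v →
    Ω u + (∑ a, DΩ u a * (v a - u a)) + ρ / 2 * (l1 u v) ^ 2 ≤ Ω v

noncomputable def Tbell {X A : Type*} [Fintype X] [Fintype A]
    (r : X → A → (X → ℝ) → ℝ) (p : X → A → (X → ℝ) → X → ℝ)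
    (Ω : (A → ℝ) → ℝ) (β : ℝ) (μ : X → ℝ) (v : X → ℝ) (x : X) : ℝ :=
  ⨆ u : {w : A → ℝ // IsProb w},
    ((∑ a, r x a μ * u.1 a) - Ω u.1 + β * ∑ y, v y * (∑ a, p x a μ y * u.1 a))

noncomputable def Qmax {X A : Type*} [Fintype A] (Q : X → (A → ℝ) → ℝ) (y : X) : ℝ :=
  ⨆ u : {w : A → ℝ // IsProb w}, Q y u.1

noncomputable def Lbell {X A : Type*} [Fintype X] [Fintype A]
    (r : X → A → (X → ℝ) → ℝ) (p : X → A → (X → ℝ) → X → ℝ)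
    (Ω : (A → ℝ) → ℝ) (β : ℝ) (μ : X → ℝ) (Q : X → (A → ℝ) → ℝ)
    (x : X) (u : A → ℝ) : ℝ :=
  (∑ a, r x a μ * u a) - Ω u + β * ∑ y, Qmax Q y * (∑ a, p x a μ y * u a)

def BddFixedPoint {X A : Type*} [Fintype X] [Fintype A]
    (r : X → A → (X → ℝ) → ℝ) (p : X → A → (X → ℝ) → X → ℝ)
    (Ω : (A → ℝ) → ℝ) (β : ℝ) (μ : X → ℝ) (Q : X → (A → ℝ) → ℝ) : Prop :=
  (∃ C, ∀ x u, IsProb u → |Q x u| ≤ C) ∧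
  (∀ x u, IsProb u → Q x u = Lbell r p Ω β μ Q x u)

lemma l1_nonneg {E : Type*} [Fintype E] (μ ν : E → ℝ) : 0 ≤ l1 μ ν :=
  Finset.sum_nonneg fun e _ => abs_nonneg _

lemma l1_self {E : Type*} [Fintype E] (μ : E → ℝ) : l1 μ μ = 0 := by simp [l1]

lemma l1_comm {E : Type*} [Fintype E] (μ ν : E → ℝ) : l1 μ ν = l1 ν μ :=
  Finset.sum_congr rfl fun e _ => abs_sub_comm _ _

lemma ind_nonneg {E : Type*} [DecidableEq E] (x y : E) : 0 ≤ ind x y := by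
  unfold ind; split <;> norm_num

lemma ind_le_one {E : Type*} [DecidableEq E] (x y : E) : ind x y ≤ 1 := by
  unfold ind; split <;> norm_num

lemma ind_self {E : Type*} [DecidableEq E] (x : E) : ind x x = 0 := by simp [ind]

lemma wsum_abs_le {A : Type*} [Fintype A] {t u : A → ℝ} {M : ℝ}
    (hu : IsProb u) (ht : ∀ a, |t a| ≤ M) : |∑ a, t a * u a| ≤ M := by
  calc |∑ a, t a * u a| ≤ ∑ a, |t a * u a| := Finset.abs_sum_le_sum_abs _ _
    _ = ∑ a, |t a| * u a := by
        refine Finset.sum_congr rfl fun a _ => ?_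
        rw [abs_mul, abs_of_nonneg (hu.1 a)]
    _ ≤ ∑ a, M * u a := by
        refine Finset.sum_le_sum fun a _ => mul_le_mul_of_nonneg_right (ht a) (hu.1 a)
    _ = M := by rw [← Finset.mul_sum, hu.2, mul_one]

lemma span_pair_bound {E : Type*} [Fintype E] [Nonempty E] (g q q' : E → ℝ) (M : ℝ)
    (hspan : ∀ e e', |g e - g e'| ≤ M) (hsum : ∑ e, q e = ∑ e, q' e) :
    |∑ e, g e * (q e - q' e)| ≤ M / 2 * l1 q q' := by
  set s := Finset.univ.sup' Finset.univ_nonempty g with hs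
  set i := Finset.univ.inf' Finset.univ_nonempty g with hi
  set m := (s + i) / 2 with hm
  obtain ⟨e₁, -, he₁⟩ := Finset.exists_mem_eq_sup' Finset.univ_nonempty g
  obtain ⟨e₂, -, he₂⟩ := Finset.exists_mem_eq_inf' Finset.univ_nonempty g
  have hsi : s - i ≤ M := by
    rw [hs, hi, he₁, he₂]
    exact (le_abs_self _).trans (hspan e₁ e₂)
  have hgm : ∀ e, |g e - m| ≤ M / 2 := by
    intro e
    have h1 : g e ≤ s := Finset.le_sup' g (Finset.mem_univ e)
    have h2 : i ≤ g e := Finset.inf'_le g (Finset.mem_univ e)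
    rw [abs_le]; constructor <;> [skip; skip] <;> simp only [hm] <;> linarith
  have hzero : ∑ e, (q e - q' e) = 0 := by
    rw [Finset.sum_sub_distrib, hsum, sub_self]
  have key : ∑ e, g e * (q e - q' e) = ∑ e, (g e - m) * (q e - q' e) := by
    have : ∑ e, (g e - m) * (q e - q' e)
        = ∑ e, g e * (q e - q' e) - m * ∑ e, (q e - q' e) := by
      rw [Finset.mul_sum, ← Finset.sum_sub_distrib]
      exact Finset.sum_congr rfl fun e _ => by ring
    rw [this, hzero, mul_zero, sub_zero]
  rw [key]
  calc |∑ e, (g e - m) * (q e - q' e)| ≤ ∑ e, |(g e - m) * (q e - q' e)| :=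
        Finset.abs_sum_le_sum_abs _ _
    _ ≤ ∑ e, M / 2 * |q e - q' e| := by
        refine Finset.sum_le_sum fun e _ => ?_
        rw [abs_mul]
        exact mul_le_mul_of_nonneg_right (hgm e) (abs_nonneg _)
    _ = M / 2 * l1 q q' := by rw [l1, Finset.mul_sum]

/-- span (oscillation) of the value function is at most `L1 / (1 - β K1 / 2)` -/
lemma span_le {X A : Type*} [Fintype X] [Fintype A] [Nonempty X] [Nonempty A]
    [DecidableEq X] [DecidableEq A]
    {r : X → A → (X → ℝ) → ℝ} {p : X → A → (X → ℝ) → X → ℝ}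
    {L1 K1 β : ℝ} (hL1 : 0 ≤ L1) (hK1 : 0 ≤ K1) (hβ0 : 0 < β)
    (hc1 : 0 < 1 - β * K1 / 2)
    (hr : RewardLip r L1) (hp : KernelLip p K1) (hp_prob : IsKernel p)
    {μ : X → ℝ} (hμ : IsProb μ)
    {Q : X → (A → ℝ) → ℝ} {Ω : (A → ℝ) → ℝ}
    {f : X → A → ℝ} (hf : ∀ x, IsProb (f x))
    (hfmax : ∀ x u, IsProb u → Q x u ≤ Q x (f x))
    {V : X → ℝ} (hV : ∀ y, V y = Q y (f y))
    {g : X → A → ℝ}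
    (hg : ∀ y a, g y a = r y a μ + β * ∑ z, V z * p y a μ z)
    (hexp : ∀ y u, IsProb u → Q y u = (∑ a, g y a * u a) - Ω u) :
    ∀ z z', |V z - V z'| ≤ L1 / (1 - β * K1 / 2) := by
  set S := Finset.univ.sup' Finset.univ_nonempty V with hS
  set I := Finset.univ.inf' Finset.univ_nonempty V with hI
  have hSI : ∀ z z', |V z - V z'| ≤ S - I := by
    intro z z'
    have h1 : V z ≤ S := Finset.le_sup' V (Finset.mem_univ z)
    have h2 : I ≤ V z' := Finset.inf'_le V (Finset.mem_univ z')
    have h3 : V z' ≤ S := Finset.le_sup' V (Finset.mem_univ z')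
    have h4 : I ≤ V z := Finset.inf'_le V (Finset.mem_univ z)
    rw [abs_le]; constructor <;> linarith
  have hTnn : 0 ≤ S - I := by
    have := hSI (Classical.arbitrary X) (Classical.arbitrary X)
    have h0 := abs_nonneg (V (Classical.arbitrary X) - V (Classical.arbitrary X))
    linarith
  -- per action bound
  have key : ∀ y y' a, |g y a - g y' a| ≤ L1 * ind y y' + β * ((S - I) / 2 * (K1 * ind y y')) := by
    intro y y' a
    have hrd := hr y y' a a μ μ hμ hμ
    simp only [ind_self, l1_self, mul_zero, add_zero] at hrd
    have hps : ∑ z, p y a μ z = ∑ z, p y' a μ z := by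
      rw [(hp_prob y a μ hμ).2, (hp_prob y' a μ hμ).2]
    have hpd : |∑ z, V z * (p y a μ z - p y' a μ z)| ≤ (S - I) / 2 * l1 (p y a μ) (p y' a μ) :=
      span_pair_bound V _ _ (S - I) hSI hps
    have hpk := hp y y' a a μ μ hμ hμ
    simp only [ind_self, l1_self, mul_zero, add_zero] at hpk
    have hpd2 : |∑ z, V z * (p y a μ z - p y' a μ z)| ≤ (S - I) / 2 * (K1 * ind y y') :=
      hpd.trans (mul_le_mul_of_nonneg_left hpk (by linarith))
    have hsplit : g y a - g y' a
        = (r y a μ - r y' a μ) + β * ∑ z, V z * (p y a μ z - p y' a μ z) := by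
      rw [hg, hg]
      have : ∑ z, V z * (p y a μ z - p y' a μ z)
          = (∑ z, V z * p y a μ z) - ∑ z, V z * p y' a μ z := by
        rw [← Finset.sum_sub_distrib]
        exact Finset.sum_congr rfl fun z _ => by ring
      rw [this]; ring
    rw [hsplit]
    calc |(r y a μ - r y' a μ) + β * ∑ z, V z * (p y a μ z - p y' a μ z)|
        ≤ |r y a μ - r y' a μ| + |β * ∑ z, V z * (p y a μ z - p y' a μ z)| := abs_add_le _ _
      _ ≤ L1 * ind y y' + β * ((S - I) / 2 * (K1 * ind y y')) := by
          rw [abs_mul, abs_of_pos hβ0]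
          exact add_le_add hrd (mul_le_mul_of_nonneg_left hpd2 hβ0.le)
  have hT : S - I ≤ L1 + β * K1 / 2 * (S - I) := by
    obtain ⟨y, -, he₁⟩ := Finset.exists_mem_eq_sup' Finset.univ_nonempty V
    obtain ⟨y', -, he₂⟩ := Finset.exists_mem_eq_inf' Finset.univ_nonempty V
    have hstep : S - I ≤ Q y (f y) - Q y' (f y) := by
      have h1 : Q y' (f y) ≤ Q y' (f y') := hfmax y' (f y) (hf y)
      rw [hS, hI, he₁, he₂, hV y, hV y']
      linarith
    have hqd : Q y (f y) - Q y' (f y) = ∑ a, (g y a - g y' a) * f y a := by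
      rw [hexp y (f y) (hf y), hexp y' (f y) (hf y)]
      have : ∑ a, (g y a - g y' a) * f y a
          = (∑ a, g y a * f y a) - ∑ a, g y' a * f y a := by
        rw [← Finset.sum_sub_distrib]
        exact Finset.sum_congr rfl fun a _ => by ring
      rw [this]; ring
    have hbd : |∑ a, (g y a - g y' a) * f y a| ≤ L1 + β * K1 / 2 * (S - I) := by
      refine wsum_abs_le (hf y) fun a => (key y y' a).trans ?_
      have h1 := ind_le_one y y'
      have h2 := ind_nonneg y y'
      have h3 : 0 ≤ β * K1 * (S - I) := mul_nonneg (mul_nonneg hβ0.le hK1) hTnn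
      nlinarith [mul_le_mul_of_nonneg_left h1 h3, mul_le_mul_of_nonneg_left h1 hL1]
    calc S - I ≤ Q y (f y) - Q y' (f y) := hstep
      _ = ∑ a, (g y a - g y' a) * f y a := hqd
      _ ≤ |∑ a, (g y a - g y' a) * f y a| := le_abs_self _
      _ ≤ L1 + β * K1 / 2 * (S - I) := hbd
  intro z z'
  refine (hSI z z').trans ?_
  rw [le_div_iff₀ hc1]
  nlinarith


lemma qmax_eq {X A : Type*} [Fintype A] (Q : X → (A → ℝ) → ℝ) (C : ℝ)
    (hC : ∀ x u, IsProb u → |Q x u| ≤ C) (x : X) (u₀ : A → ℝ) (h₀ : IsProb u₀)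
    (hmax : ∀ u, IsProb u → Q x u ≤ Q x u₀) : Qmax Q x = Q x u₀ := by
  haveI : Nonempty {w : A → ℝ // IsProb w} := ⟨⟨u₀, h₀⟩⟩
  apply le_antisymm
  · exact ciSup_le fun u => hmax u.1 u.2
  · refine le_ciSup (f := fun u : {w : A → ℝ // IsProb w} => Q x u.1) ?_ ⟨u₀, h₀⟩
    refine ⟨C, ?_⟩
    rintro v ⟨u, rfl⟩
    exact (abs_le.mp (hC x u.1 u.2)).2

/-- dirac measure -/
def dirac {A : Type*} [Fintype A] [DecidableEq A] (a : A) : A → ℝ :=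
  fun b => if b = a then 1 else 0

lemma dirac_prob {A : Type*} [Fintype A] [DecidableEq A] (a : A) : IsProb (dirac a) := by
  constructor
  · intro b; unfold dirac; split <;> norm_num
  · simp [dirac]

lemma sum_dirac {A : Type*} [Fintype A] [DecidableEq A] (g : A → ℝ) (a : A) :
    ∑ b, g b * dirac a b = g a := by
  simp [dirac, mul_ite]

/-- strong concavity quadratic growth at the maximizer -/
lemma strong_max {A : Type*} [Fintype A] {Ω : (A → ℝ) → ℝ} {DΩ : (A → ℝ) → (A → ℝ)}
    {ρ : ℝ} (hρ : 0 < ρ) (hΩ : StrongConvex Ω DΩ ρ) (g : A → ℝ) (u₀ : A → ℝ)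
    (h₀ : IsProb u₀)
    (hmax : ∀ v, IsProb v → (∑ a, g a * v a) - Ω v ≤ (∑ a, g a * u₀ a) - Ω u₀)
    (v : A → ℝ) (hv : IsProb v) :
    ρ / 2 * (l1 u₀ v) ^ 2 ≤ ((∑ a, g a * u₀ a) - Ω u₀) - ((∑ a, g a * v a) - Ω v) := by
  set d := l1 u₀ v with hd
  have hd0 : 0 ≤ d := Finset.sum_nonneg fun e _ => abs_nonneg _
  set D := ((∑ a, g a * u₀ a) - Ω u₀) - ((∑ a, g a * v a) - Ω v) with hD
  have hD0 : 0 ≤ D := sub_nonneg.mpr (hmax v hv)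
  -- the step estimate for each t ∈ (0,1]
  have step : ∀ t : ℝ, 0 < t → t ≤ 1 → ρ / 2 * (1 - t) * d ^ 2 ≤ D := by
    intro t ht0 ht1
    set w : A → ℝ := fun a => (1 - t) * u₀ a + t * v a with hw
    have hwprob : IsProb w := by
      constructor
      · intro a
        have := h₀.1 a; have := hv.1 a
        have h1t : 0 ≤ 1 - t := by linarith
        positivity
      · simp only [hw, Finset.sum_add_distrib, ← Finset.mul_sum, h₀.2, hv.2]
        ring
    have hl1u : l1 w u₀ = t * d := by
      rw [hd, l1, l1, Finset.mul_sum]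
      refine Finset.sum_congr rfl fun a _ => ?_
      have : w a - u₀ a = t * (v a - u₀ a) := by simp only [hw]; ring
      rw [this, abs_mul, abs_of_pos ht0, abs_sub_comm]
    have hl1v : l1 w v = (1 - t) * d := by
      rw [hd, l1, l1, Finset.mul_sum]
      refine Finset.sum_congr rfl fun a _ => ?_
      have : w a - v a = (1 - t) * (u₀ a - v a) := by simp only [hw]; ring
      rw [this, abs_mul, abs_of_nonneg (by linarith : (0:ℝ) ≤ 1 - t)]
    have h1 := hΩ w u₀ hwprob h₀
    have h2 := hΩ w v hwprob hv
    rw [hl1u] at h1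
    rw [hl1v] at h2
    -- gradient cancellation
    have hgrad : (1 - t) * (∑ a, DΩ w a * (u₀ a - w a)) + t * (∑ a, DΩ w a * (v a - w a)) = 0 := by
      rw [Finset.mul_sum, Finset.mul_sum, ← Finset.sum_add_distrib]
      refine Finset.sum_eq_zero fun a _ => ?_
      simp only [hw]; ring
    -- convexity combination : Ω w + ρ/2 * t*(1-t)*d^2 ≤ (1-t) * Ω u₀ + t * Ω v
    have hcomb : Ω w + ρ / 2 * (t * (1 - t)) * d ^ 2 ≤ (1 - t) * Ω u₀ + t * Ω v := by
      nlinarith [mul_le_mul_of_nonneg_left h1 (by linarith : (0:ℝ) ≤ 1 - t),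
        mul_le_mul_of_nonneg_left h2 ht0.le]
    -- linearity of the linear part
    have hlin : ∑ a, g a * w a = (1 - t) * ∑ a, g a * u₀ a + t * ∑ a, g a * v a := by
      rw [Finset.mul_sum, Finset.mul_sum, ← Finset.sum_add_distrib]
      refine Finset.sum_congr rfl fun a _ => ?_
      simp only [hw]; ring
    have hmw := hmax w hwprob
    rw [hlin] at hmw
    -- combine: t*(F u₀ - F v) ≥ ρ/2 t (1-t) d²; divide by t
    have hkey : ρ / 2 * (t * (1 - t)) * d ^ 2 ≤ t * D := by
      simp only [hD]; nlinarith [hcomb, hmw]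
    have := (mul_le_mul_iff_right₀ ht0).mp (by nlinarith [hkey] : t * (ρ / 2 * (1 - t) * d ^ 2) ≤ t * D)
    linarith
  -- pass to the limit t → 0
  by_contra hcon
  push_neg at hcon
  set c := ρ / 2 * d ^ 2 with hc
  have hcD : D < c := hcon
  have hc0 : 0 < c := lt_of_le_of_lt hD0 hcD
  set t := (c - D) / (2 * c) with ht
  have ht0 : 0 < t := div_pos (by linarith) (by positivity)
  have ht1 : t ≤ 1 := by
    rw [ht, div_le_one (by positivity)]
    linarith
  have := step t ht0 ht1
  have hexp : ρ / 2 * (1 - t) * d ^ 2 = c - t * c := by rw [hc]; ring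
  rw [hexp] at this
  have htc : t * c = (c - D) / 2 := by
    rw [ht]; field_simp
  rw [htc] at this
  linarith


/-- Lemma 4: Lipschitz continuity of the optimal policy,
`‖f_μ(x) - f_{μ̂}(x̂)‖₁ ≤ (1/ρ) K_{H1} (1_{x≠x̂} + ‖μ - μ̂‖₁)`. -/
theorem statement9 {X A : Type*} [Fintype X] [Fintype A] [Nonempty X] [Nonempty A]
    [DecidableEq X] [DecidableEq A]
    (r : X → A → (X → ℝ) → ℝ) (p : X → A → (X → ℝ) → X → ℝ)
    (L1 K1 : ℝ) (hL1 : 0 ≤ L1) (hK1 : 0 ≤ K1)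
    (hr_nonneg : RewardNonneg r) (hr : RewardLip r L1)
    (hp_prob : IsKernel p) (hp : KernelLip p K1)
    (Ω : (A → ℝ) → ℝ) (DΩ : (A → ℝ) → (A → ℝ)) (ρ : ℝ) (hρ : 0 < ρ)
    (hΩ : StrongConvex Ω DΩ ρ)
    (β : ℝ) (hβ0 : 0 < β) (hβ1 : β < 1) (hβK : β * K1 / 2 < 1)
    (μ μ' : X → ℝ) (hμ : IsProb μ) (hμ' : IsProb μ')
    (Q Q' : X → (A → ℝ) → ℝ)
    (hQ : BddFixedPoint r p Ω β μ Q) (hQ' : BddFixedPoint r p Ω β μ' Q')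
    (f f' : X → A → ℝ)
    (hf : ∀ x, IsProb (f x)) (hf' : ∀ x, IsProb (f' x))
    (hfmax : ∀ x u, IsProb u → Q x u ≤ Q x (f x))
    (hf'max : ∀ x u, IsProb u → Q' x u ≤ Q' x (f' x)) :
    ∀ x x', l1 (f x) (f' x') ≤
      (1 / ρ) * ((L1 / (1 - β * K1 / 2)) / (1 - β)) * (ind x x' + l1 μ μ') := by
  intro x x'
  have hc1 : 0 < 1 - β * K1 / 2 := by linarith
  have hb1 : 0 < 1 - β := by linarith
  set qL : ℝ := L1 / (1 - β * K1 / 2) with hqLdef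
  set kH : ℝ := qL / (1 - β) with hkHdef
  have hqL0 : 0 ≤ qL := div_nonneg hL1 hc1.le
  have hkH0 : 0 ≤ kH := div_nonneg hqL0 hb1.le
  have hqLmul : qL * (1 - β * K1 / 2) = L1 := by
    rw [hqLdef, div_mul_cancel₀ _ hc1.ne']
  have hkHmul : kH * (1 - β) = qL := by
    rw [hkHdef, div_mul_cancel₀ _ hb1.ne']
  have hqLid : L1 + β * K1 / 2 * qL = qL := by linear_combination (-1 : ℝ) * hqLmul
  have hkHid : qL + β * kH = kH := by linear_combination (-1 : ℝ) * hkHmul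
  obtain ⟨⟨C, hC⟩, hQfix⟩ := hQ
  obtain ⟨⟨C', hC'⟩, hQ'fix⟩ := hQ'
  set V : X → ℝ := fun y => Q y (f y) with hVdef
  set V' : X → ℝ := fun y => Q' y (f' y) with hV'def
  have hQmax : ∀ y, Qmax Q y = V y := fun y =>
    qmax_eq Q C hC y (f y) (hf y) fun u hu => hfmax y u hu
  have hQ'max : ∀ y, Qmax Q' y = V' y := fun y =>
    qmax_eq Q' C' hC' y (f' y) (hf' y) fun u hu => hf'max y u hu
  set g : X → A → ℝ := fun y a => r y a μ + β * ∑ z, V z * p y a μ z with hgdef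
  set g' : X → A → ℝ := fun y a => r y a μ' + β * ∑ z, V' z * p y a μ' z with hg'def
  have hexp : ∀ y u, IsProb u → Q y u = (∑ a, g y a * u a) - Ω u := by
    intro y u hu
    rw [hQfix y u hu]
    simp only [Lbell, hQmax]
    have swap : ∑ z, V z * (∑ a, p y a μ z * u a) = ∑ a, (∑ z, V z * p y a μ z) * u a := by
      simp only [Finset.mul_sum, Finset.sum_mul]
      rw [Finset.sum_comm]
      exact Finset.sum_congr rfl fun a _ => Finset.sum_congr rfl fun z _ => by ring
    have expand : ∑ a, g y a * u a
        = (∑ a, r y a μ * u a) + β * ∑ a, (∑ z, V z * p y a μ z) * u a := by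
      rw [Finset.mul_sum, ← Finset.sum_add_distrib]
      refine Finset.sum_congr rfl fun a _ => ?_
      simp only [hgdef]; ring
    rw [expand, ← swap]; ring
  have hexp' : ∀ y u, IsProb u → Q' y u = (∑ a, g' y a * u a) - Ω u := by
    intro y u hu
    rw [hQ'fix y u hu]
    simp only [Lbell, hQ'max]
    have swap : ∑ z, V' z * (∑ a, p y a μ' z * u a) = ∑ a, (∑ z, V' z * p y a μ' z) * u a := by
      simp only [Finset.mul_sum, Finset.sum_mul]
      rw [Finset.sum_comm]
      exact Finset.sum_congr rfl fun a _ => Finset.sum_congr rfl fun z _ => by ring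
    have expand : ∑ a, g' y a * u a
        = (∑ a, r y a μ' * u a) + β * ∑ a, (∑ z, V' z * p y a μ' z) * u a := by
      rw [Finset.mul_sum, ← Finset.sum_add_distrib]
      refine Finset.sum_congr rfl fun a _ => ?_
      simp only [hg'def]; ring
    rw [expand, ← swap]; ring
  have spanV : ∀ z z', |V z - V z'| ≤ qL := by
    intro z z'
    rw [hqLdef]
    exact span_le hL1 hK1 hβ0 hc1 hr hp hp_prob hμ hf hfmax (fun y => rfl)
      (fun y a => rfl) hexp z z'
  -- per-action bound in the state variable
  have keyg : ∀ y y' a, |g y a - g y' a| ≤ qL * ind y y' := by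
    intro y y' a
    have hrd := hr y y' a a μ μ hμ hμ
    simp only [ind_self, l1_self, mul_zero, add_zero] at hrd
    have hps : ∑ z, p y a μ z = ∑ z, p y' a μ z := by
      rw [(hp_prob y a μ hμ).2, (hp_prob y' a μ hμ).2]
    have hpd := span_pair_bound V (p y a μ) (p y' a μ) qL spanV hps
    have hpk := hp y y' a a μ μ hμ hμ
    simp only [ind_self, l1_self, mul_zero, add_zero] at hpk
    have hpd2 : |∑ z, V z * (p y a μ z - p y' a μ z)| ≤ qL / 2 * (K1 * ind y y') :=
      hpd.trans (mul_le_mul_of_nonneg_left hpk (by linarith))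
    have hsplit : g y a - g y' a
        = (r y a μ - r y' a μ) + β * ∑ z, V z * (p y a μ z - p y' a μ z) := by
      simp only [hgdef]
      have e1 : ∑ z, V z * (p y a μ z - p y' a μ z)
          = (∑ z, V z * p y a μ z) - ∑ z, V z * p y' a μ z := by
        rw [← Finset.sum_sub_distrib]
        exact Finset.sum_congr rfl fun z _ => by ring
      rw [e1]; ring
    rw [hsplit]
    calc |(r y a μ - r y' a μ) + β * ∑ z, V z * (p y a μ z - p y' a μ z)|
        ≤ |r y a μ - r y' a μ| + |β * ∑ z, V z * (p y a μ z - p y' a μ z)| := abs_add_le _ _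
      _ ≤ L1 * ind y y' + β * (qL / 2 * (K1 * ind y y')) := by
          rw [abs_mul, abs_of_pos hβ0]
          exact add_le_add hrd (mul_le_mul_of_nonneg_left hpd2 hβ0.le)
      _ = qL * ind y y' := by linear_combination (ind y y') * hqLid
  -- cross (population) per-action bound
  set W : ℝ := Finset.univ.sup' Finset.univ_nonempty (fun z => |V z - V' z|) with hWdef
  have hWb : ∀ z, |V z - V' z| ≤ W :=
    fun z => Finset.le_sup' (fun z => |V z - V' z|) (Finset.mem_univ z)
  have keyc : ∀ y a, |g y a - g' y a| ≤ qL * l1 μ μ' + β * W := by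
    intro y a
    have hrd := hr y y a a μ μ' hμ hμ'
    simp only [ind_self, mul_zero, zero_add, add_zero] at hrd
    have hsplit : g y a - g' y a = (r y a μ - r y a μ')
        + β * ((∑ z, (V z - V' z) * p y a μ' z) + ∑ z, V z * (p y a μ z - p y a μ' z)) := by
      simp only [hgdef, hg'def]
      have e1 : ∑ z, (V z - V' z) * p y a μ' z
          = (∑ z, V z * p y a μ' z) - ∑ z, V' z * p y a μ' z := by
        rw [← Finset.sum_sub_distrib]
        exact Finset.sum_congr rfl fun z _ => by ring
      have e2 : ∑ z, V z * (p y a μ z - p y a μ' z)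
          = (∑ z, V z * p y a μ z) - ∑ z, V z * p y a μ' z := by
        rw [← Finset.sum_sub_distrib]
        exact Finset.sum_congr rfl fun z _ => by ring
      rw [e1, e2]; ring
    have h1 : |∑ z, (V z - V' z) * p y a μ' z| ≤ W :=
      wsum_abs_le (hp_prob y a μ' hμ') hWb
    have hps : ∑ z, p y a μ z = ∑ z, p y a μ' z := by
      rw [(hp_prob y a μ hμ).2, (hp_prob y a μ' hμ').2]
    have hpk := hp y y a a μ μ' hμ hμ'
    simp only [ind_self, mul_zero, zero_add, add_zero] at hpk
    have h2 : |∑ z, V z * (p y a μ z - p y a μ' z)| ≤ qL / 2 * (K1 * l1 μ μ') :=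
      (span_pair_bound V (p y a μ) (p y a μ') qL spanV hps).trans
        (mul_le_mul_of_nonneg_left hpk (by linarith))
    rw [hsplit]
    calc |(r y a μ - r y a μ')
        + β * ((∑ z, (V z - V' z) * p y a μ' z) + ∑ z, V z * (p y a μ z - p y a μ' z))|
        ≤ |r y a μ - r y a μ'|
          + β * |(∑ z, (V z - V' z) * p y a μ' z) + ∑ z, V z * (p y a μ z - p y a μ' z)| := by
          refine (abs_add_le _ _).trans ?_
          rw [abs_mul, abs_of_pos hβ0]
      _ ≤ L1 * l1 μ μ' + β * (W + qL / 2 * (K1 * l1 μ μ')) := by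
          refine add_le_add hrd (mul_le_mul_of_nonneg_left ?_ hβ0.le)
          exact (abs_add_le _ _).trans (add_le_add h1 h2)
      _ = qL * l1 μ μ' + β * W := by linear_combination (l1 μ μ') * hqLid
  -- the value-gap recursion
  have hdiffQ : ∀ y y' u, IsProb u → Q y u - Q' y' u = ∑ a, (g y a - g' y' a) * u a := by
    intro y y' u hu
    rw [hexp y u hu, hexp' y' u hu]
    have e : ∑ a, (g y a - g' y' a) * u a
        = (∑ a, g y a * u a) - ∑ a, g' y' a * u a := by
      rw [← Finset.sum_sub_distrib]
      exact Finset.sum_congr rfl fun a _ => by ring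
    rw [e]; ring
  have hW : W ≤ qL * l1 μ μ' + β * W := by
    obtain ⟨z, -, hz⟩ := Finset.exists_mem_eq_sup' Finset.univ_nonempty (fun z => |V z - V' z|)
    have hWeq : W = |V z - V' z| := hz
    calc W = |V z - V' z| := hWeq
      _ ≤ qL * l1 μ μ' + β * W := by
          rw [abs_sub_le_iff]
          constructor
          · have hm : Q' z (f z) ≤ Q' z (f' z) := hf'max z (f z) (hf z)
            have e := hdiffQ z z (f z) (hf z)
            have hb := wsum_abs_le (hf z) (fun a => keyc z a)
            calc V z - V' z ≤ Q z (f z) - Q' z (f z) := by simp only [hVdef, hV'def]; linarith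
              _ = ∑ a, (g z a - g' z a) * f z a := e
              _ ≤ |∑ a, (g z a - g' z a) * f z a| := le_abs_self _
              _ ≤ qL * l1 μ μ' + β * W := hb
          · have hm : Q z (f' z) ≤ Q z (f z) := hfmax z (f' z) (hf' z)
            have e := hdiffQ z z (f' z) (hf' z)
            have hb := wsum_abs_le (hf' z) (fun a => keyc z a)
            calc V' z - V z ≤ Q' z (f' z) - Q z (f' z) := by simp only [hVdef, hV'def]; linarith
              _ = -(Q z (f' z) - Q' z (f' z)) := by ring
              _ = -∑ a, (g z a - g' z a) * f' z a := by rw [e]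
              _ ≤ |∑ a, (g z a - g' z a) * f' z a| := neg_le_abs _
              _ ≤ qL * l1 μ μ' + β * W := hb
  have hWle : W ≤ kH * l1 μ μ' := by
    rw [hkHdef, div_mul_eq_mul_div, le_div_iff₀ hb1]
    nlinarith [hW]
  have hgc : ∀ a, |g x a - g' x' a| ≤ kH * (ind x x' + l1 μ μ') := by
    intro a
    have hql_le : qL ≤ kH := by nlinarith [mul_nonneg hβ0.le hkH0]
    have hβW : β * W ≤ β * (kH * l1 μ μ') := mul_le_mul_of_nonneg_left hWle hβ0.le
    calc |g x a - g' x' a| ≤ |g x a - g x' a| + |g x' a - g' x' a| := abs_sub_le _ _ _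
      _ ≤ qL * ind x x' + (qL * l1 μ μ' + β * W) := add_le_add (keyg x x' a) (keyc x' a)
      _ ≤ qL * ind x x' + (qL * l1 μ μ' + β * (kH * l1 μ μ')) := by linarith
      _ = qL * ind x x' + kH * l1 μ μ' := by linear_combination (l1 μ μ') * hkHid
      _ ≤ kH * (ind x x' + l1 μ μ') := by
          nlinarith [mul_le_mul_of_nonneg_right hql_le (ind_nonneg x x')]
  -- strong concavity at the two maximizers
  have hmax1 : ∀ v, IsProb v → (∑ a, g x a * v a) - Ω v ≤ (∑ a, g x a * f x a) - Ω (f x) := by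
    intro v hv
    rw [← hexp x v hv, ← hexp x (f x) (hf x)]
    exact hfmax x v hv
  have hmax2 : ∀ v, IsProb v →
      (∑ a, g' x' a * v a) - Ω v ≤ (∑ a, g' x' a * f' x' a) - Ω (f' x') := by
    intro v hv
    rw [← hexp' x' v hv, ← hexp' x' (f' x') (hf' x')]
    exact hf'max x' v hv
  have hs1 := strong_max hρ hΩ (g x) (f x) (hf x) hmax1 (f' x') (hf' x')
  have hs2 := strong_max hρ hΩ (g' x') (f' x') (hf' x') hmax2 (f x) (hf x)
  set d : ℝ := l1 (f x) (f' x') with hd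
  have hdsym : l1 (f' x') (f x) = d := l1_comm _ _
  rw [hdsym] at hs2
  have hcombine : ρ * d ^ 2 ≤ ∑ a, (g x a - g' x' a) * (f x a - f' x' a) := by
    have e : ∑ a, (g x a - g' x' a) * (f x a - f' x' a)
        = ((∑ a, g x a * f x a) - (∑ a, g x a * f' x' a))
          + ((∑ a, g' x' a * f' x' a) - (∑ a, g' x' a * f x a)) := by
      simp only [sub_mul, mul_sub]
      rw [Finset.sum_sub_distrib, Finset.sum_sub_distrib, Finset.sum_sub_distrib]
      ring
    rw [e]
    linarith [hs1, hs2]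
  have hub : |∑ a, (g x a - g' x' a) * (f x a - f' x' a)|
      ≤ 2 * (kH * (ind x x' + l1 μ μ')) / 2 * d := by
    refine span_pair_bound (fun a => g x a - g' x' a) (f x) (f' x') _ ?_
      (by rw [(hf x).2, (hf' x').2])
    intro a b
    have h3 : |(g x a - g' x' a) - (g x b - g' x' b)|
        ≤ |g x a - g' x' a| + |g x b - g' x' b| := by
      rw [sub_eq_add_neg]
      exact (abs_add_le _ _).trans (by rw [abs_neg])
    exact h3.trans (by linarith [hgc a, hgc b])
  have hfin : ρ * d ^ 2 ≤ kH * (ind x x' + l1 μ μ') * d := by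
    have h0 := hcombine.trans ((le_abs_self _).trans hub)
    have h2 : 2 * (kH * (ind x x' + l1 μ μ')) / 2 * d = kH * (ind x x' + l1 μ μ') * d := by
      ring
    linarith [h0, h2.ge, h2.le]
  have hd0 : 0 ≤ d := l1_nonneg _ _
  rcases eq_or_lt_of_le hd0 with h | h
  · rw [← h]
    exact mul_nonneg (mul_nonneg (by positivity) hkH0)
      (add_nonneg (ind_nonneg x x') (l1_nonneg μ μ'))
  · have hdd : d ≤ kH * (ind x x' + l1 μ μ') / ρ := by
      rw [le_div_iff₀ hρ]
      nlinarith [hfin, h]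
    have heq : 1 / ρ * kH * (ind x x' + l1 μ μ') = kH * (ind x x' + l1 μ μ') / ρ := by
      ring
    rw [heq]
    exact hdd


end MFG
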